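/- For real τ ≥ 1, real z > 0, and real Δz with Δz/z ≥ (1−τ)/τ and z + Δz > 0, it holds that −ln(z + Δz) ≤ −ln z − Δz/z + (τ/2)(Δz)²/z². -/

import Mathlib

private lemma F_deriv (τ z : ℝ) {x : ℝ} (hx : 0 < x) :
    HasDerivAt (fun x : ℝ => Real.log x - (x - z)/z + τ/2 * (x - z)^2 / z^2)
      (x⁻¹ - 1/z + τ/2 * (2 * (x - z)) / z^2) x := by
  have h1 : HasDerivAt (fun x : ℝ => Real.log x) x⁻¹ x := Real.hasDerivAt_log hx.ne'
  have h2 : HasDerivAt (fun x : ℝ => (x - z)/z) (1/z) x := by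
    simpa using (((hasDerivAt_id x).sub_const z).div_const z)
  have h3 : HasDerivAt (fun x : ℝ => τ/2 * (x - z)^2 / z^2)
      (τ/2 * (2 * (x - z)) / z^2) x := by
    have : HasDerivAt (fun x : ℝ => (x - z)^2) (2 * (x - z)) x := by
      simpa using ((hasDerivAt_id x).sub_const z).fun_pow 2
    simpa [mul_comm, mul_assoc, mul_left_comm] using ((this.const_mul (τ/2)).div_const (z^2))
  exact (h1.sub h2).add h3

private lemma F_deriv_eq (τ z : ℝ) {x : ℝ} (hx : 0 < x) (hz : 0 < z) :
    x⁻¹ - 1/z + τ/2 * (2 * (x - z)) / z^2 = (x - z) * (τ * x - z) / (x * z^2) := by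
  field_simp
  ring

theorem stmt_5 (τ z Δz : ℝ) (hτ : 1 ≤ τ) (hz : 0 < z)
    (hratio : (1 - τ) / τ ≤ Δz / z) (hpos : 0 < z + Δz) :
    -Real.log (z + Δz) ≤ -Real.log z - Δz / z + τ / 2 * Δz ^ 2 / z ^ 2 := by
  have hτ0 : (0:ℝ) < τ := lt_of_lt_of_le one_pos hτ
  set F : ℝ → ℝ := fun x => Real.log x - (x - z)/z + τ/2 * (x - z)^2 / z^2 with hF
  have hlow : z ≤ τ * (z + Δz) := by
    rw [div_le_div_iff₀ hτ0 hz] at hratio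
    nlinarith
  have hFz : F z = Real.log z := by simp [hF]
  have key : F z ≤ F (z + Δz) := by
    rcases le_or_gt z (z + Δz) with hle | hlt
    · have hcont : ContinuousOn F (Set.Icc z (z + Δz)) := fun x hx =>
        ((F_deriv τ z (hz.trans_le hx.1)).continuousAt).continuousWithinAt
      have hdiff : DifferentiableOn ℝ F (interior (Set.Icc z (z + Δz))) := by
        intro x hx
        rw [interior_Icc] at hx
        exact ((F_deriv τ z (hz.trans hx.1)).differentiableAt).differentiableWithinAt
      have hsign : ∀ x ∈ interior (Set.Icc z (z + Δz)), 0 ≤ deriv F x := by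
        intro x hx
        rw [interior_Icc] at hx
        have hx0 : 0 < x := hz.trans hx.1
        rw [(F_deriv τ z hx0).deriv, F_deriv_eq τ z hx0 hz]
        apply div_nonneg _ (by positivity)
        have h1 : 0 ≤ x - z := by linarith [hx.1]
        have h2 : 0 ≤ τ * x - z := by nlinarith [mul_nonneg (sub_nonneg.2 hτ) hx0.le]
        exact mul_nonneg h1 h2
      exact monotoneOn_of_deriv_nonneg (convex_Icc _ _) hcont hdiff hsign
        (Set.left_mem_Icc.2 hle) (Set.right_mem_Icc.2 hle) hle
    · have hcont : ContinuousOn F (Set.Icc (z + Δz) z) := fun x hx =>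
        ((F_deriv τ z (hpos.trans_le hx.1)).continuousAt).continuousWithinAt
      have hdiff : DifferentiableOn ℝ F (interior (Set.Icc (z + Δz) z)) := by
        intro x hx
        rw [interior_Icc] at hx
        exact ((F_deriv τ z (hpos.trans hx.1)).differentiableAt).differentiableWithinAt
      have hsign : ∀ x ∈ interior (Set.Icc (z + Δz) z), deriv F x ≤ 0 := by
        intro x hx
        rw [interior_Icc] at hx
        have hx0 : 0 < x := hpos.trans hx.1
        rw [(F_deriv τ z hx0).deriv, F_deriv_eq τ z hx0 hz]
        apply div_nonpos_of_nonpos_of_nonneg _ (by positivity)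
        have h1 : x - z ≤ 0 := by linarith [hx.2]
        have h2 : 0 ≤ τ * x - z := by nlinarith [hx.1, mul_lt_mul_of_pos_left hx.1 hτ0]
        exact mul_nonpos_of_nonpos_of_nonneg h1 h2
      exact antitoneOn_of_deriv_nonpos (convex_Icc _ _) hcont hdiff hsign
        (Set.left_mem_Icc.2 hlt.le) (Set.right_mem_Icc.2 hlt.le) hlt.le
  rw [hFz] at key
  have : F (z + Δz) = Real.log (z + Δz) - Δz/z + τ/2 * Δz^2 / z^2 := by simp [hF]
  rw [this] at key
  linarith
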